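/- (Kreisel condition from soundness, Theorem 'tuinsmurf') If ⟨U₀, U, α⟩ is a strict Fefermanian representation (U₀ ⊆ U, and for all sentences A: A is an axiom of U iff U₀ ⊢ α(⌜A⌝)) and both U₀ and U are sound (all their theorems are true in the standard model), then prov_α satisfies the Kreisel condition for U: U ⊢ prov_α(⌜A⌝) iff U ⊢ A. -/
import Mathlib

/-- Theorem 'tuinsmurf': if `⟨U₀, U, α⟩` is a strict Fefermanian
representation (`U₀ ⊆ U`, and `A` is an axiom of `U` iff `U₀ ⊢ α(⌜A⌝)`) and both `U₀`
and `U` are sound, then `prov_α` satisfies the Kreisel condition for `U`: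
`U ⊢ prov_α(⌜A⌝)` iff `U ⊢ A`.

Abstract interface: `Sent` is the type of sentences, `tr` truth in the standard
model, `Der γ A` derivability of `A` from the axiom set `γ`, `alpha A` the sentence
`α(⌜A⌝)`, `pr A` the sentence `prov_α(⌜A⌝)`. `hpr` is the arithmetization of
provability (`prov_α(⌜A⌝)` is true iff `A` is derivable from the sentences whose
α-code is true); `hsigma`, `hsigma_alpha` are provable Σ⁰₁-completeness for the
Σ⁰₁-sentences `pr A` and `alpha B` (using `U, U₀ ⊇ EA`). -/
theorem kreisel_of_sound_fefermanian
    (Sent : Type)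
    (Der : (Sent → Prop) → Sent → Prop)
    (U0 U AxU : Sent → Prop)
    (tr : Sent → Prop)
    (alpha pr : Sent → Sent)
    (hsub : ∀ A, U0 A → U A)
    (hFef : ∀ A, AxU A ↔ U0 (alpha A))
    (hUax : ∀ A, U A ↔ Der AxU A)
    (soundU0 : ∀ A, U0 A → tr A)
    (soundU : ∀ A, U A → tr A)
    (hpr : ∀ A, tr (pr A) ↔ Der (fun B => tr (alpha B)) A)
    (hsigma : ∀ A, tr (pr A) → U (pr A))
    (hsigma_alpha : ∀ B, tr (alpha B) → U0 (alpha B)) :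
    ∀ A, U (pr A) ↔ U A := by
  have hset : (fun B => tr (alpha B)) = AxU := by
    funext B
    exact propext ⟨fun h => (hFef B).2 (hsigma_alpha B h),
      fun h => soundU0 _ ((hFef B).1 h)⟩
  have htr : ∀ A, tr (pr A) ↔ U A := by
    intro A
    rw [hpr, hset, ← hUax]
  intro A
  exact ⟨fun h => (htr A).1 (soundU _ h), fun h => hsigma A ((htr A).2 h)⟩
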